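/- Let F : ℝ → ℂ be continuously differentiable and δ > 0. Then for every t, |F(t)| ≤ (1/(2δ))∫_{t−δ}^{t+δ} |F(u)| du + ∫_{t−δ}^{t+δ} |F'(u)| du. -/

import Mathlib

/-- Pointwise-to-integral bound underlying Gallagher's form of the large sieve:
if `F : ℝ → ℂ` is continuously differentiable and `δ > 0`, then for every `t`,
`|F(t)| ≤ (1/(2δ)) ∫_{t−δ}^{t+δ} |F(u)| du + ∫_{t−δ}^{t+δ} |F'(u)| du`. -/
theorem gallagher_pointwise_bound (F : ℝ → ℂ) (hF : ContDiff ℝ 1 F)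
    (δ : ℝ) (hδ : 0 < δ) (t : ℝ) :
    ‖F t‖ ≤ (1 / (2 * δ)) * ∫ u in (t - δ)..(t + δ), ‖F u‖ +
      ∫ u in (t - δ)..(t + δ), ‖deriv F u‖ := by
  have hc : Continuous F := hF.continuous
  have hd : Continuous (deriv F) := hF.continuous_deriv le_rfl
  have hdiff : Differentiable ℝ F := hF.differentiable one_ne_zero
  set a := t - δ with ha
  set b := t + δ with hb
  have hab : a ≤ b := by simp only [ha, hb]; linarith
  set C := ∫ u in a..b, ‖deriv F u‖ with hC
  have hCnn : 0 ≤ C :=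
    intervalIntegral.integral_nonneg hab (fun _ _ => norm_nonneg _)
  have key : ∀ u ∈ Set.Icc a b, ‖F t‖ ≤ ‖F u‖ + C := by
    intro u hu
    have hftc : ∫ v in t..u, deriv F v = F u - F t :=
      intervalIntegral.integral_deriv_eq_sub (fun v _ => hdiff v)
        (hd.intervalIntegrable t u)
    have h1 : ‖F t‖ ≤ ‖F u‖ + ‖∫ v in t..u, deriv F v‖ := by
      rw [hftc]
      have : F t = F u - (F u - F t) := by ring
      calc ‖F t‖ = ‖F u - (F u - F t)‖ := by rw [← this]
        _ ≤ ‖F u‖ + ‖F u - F t‖ := norm_sub_le _ _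
    have h2 : ‖∫ v in t..u, deriv F v‖ ≤ C := by
      rcases le_total t u with h | h
      · have := intervalIntegral.norm_integral_le_integral_norm (μ := MeasureTheory.volume) (f := deriv F) h
        refine this.trans ?_
        apply intervalIntegral.integral_mono_interval (by simp [ha]; linarith) h
          (le_trans hu.2 le_rfl)
        · filter_upwards with x using norm_nonneg _
        · exact (hd.norm.intervalIntegrable a b)
      · rw [intervalIntegral.integral_symm]
        rw [norm_neg]
        have := intervalIntegral.norm_integral_le_integral_norm (μ := MeasureTheory.volume) (f := deriv F) h
        refine this.trans ?_
        apply intervalIntegral.integral_mono_interval hu.1 h (by simp [hb]; linarith)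
        · filter_upwards with x using norm_nonneg _
        · exact (hd.norm.intervalIntegrable a b)
    linarith
  have hint : (b - a) * ‖F t‖ ≤ (∫ u in a..b, ‖F u‖) + (b - a) * C := by
    have hmono : (∫ u in a..b, (‖F t‖ : ℝ)) ≤ ∫ u in a..b, (‖F u‖ + C) := by
      apply intervalIntegral.integral_mono_on hab
      · exact intervalIntegrable_const
      · exact (hc.norm.intervalIntegrable a b).add intervalIntegrable_const
      · exact key
    rw [intervalIntegral.integral_const] at hmono
    rw [intervalIntegral.integral_add (hc.norm.intervalIntegrable a b)
      intervalIntegrable_const, intervalIntegral.integral_const] at hmono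
    simpa [smul_eq_mul] using hmono
  have hba : b - a = 2 * δ := by simp [ha, hb]; ring
  rw [hba] at hint
  rw [← mul_le_mul_iff_right₀ (show (0:ℝ) < 2 * δ by positivity)]
  have h3 : (∫ u in a..b, (‖F u‖ + C)) = (∫ u in a..b, ‖F u‖) + 2 * δ * C := by
    rw [intervalIntegral.integral_add (hc.norm.intervalIntegrable a b)
      intervalIntegrable_const, intervalIntegral.integral_const, hba, smul_eq_mul]
  rw [h3]
  have h2 : 2 * δ * (1 / (2 * δ) * ((∫ u in a..b, ‖F u‖) + 2 * δ * C))
      = (∫ u in a..b, ‖F u‖) + 2 * δ * C := by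
    field_simp
  rw [h2]
  exact hint
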